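/- Let p be a prime, let K be an algebraically closed field of characteristic p, and let T be a ℤ-weighted lattice tile whose weights w : ℤ×ℤ → ℤ are supported in ℕ×ℕ. Assume that for every pair of coprime nonzero integers c, d, the weighted areas of the (−c/d)-slope classes of T are not all divisible by p. Let f̄_T ∈ 𝔽_p[X,Y] be the reduction of f_T = ∑ w_{ij}X^iY^j(X−1)(Y−1) modulo p, let m be the degree of f̄_T in X and n its degree in Y. If α, β ∈ K^× satisfy f̄_T(α^k, β^k) = 0 for every integer k ≥ 1, then either α^k = 1 for some 1 ≤ k ≤ 2mn or β^k = 1 for some 1 ≤ k ≤ 2mn. -/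

import Mathlib

open Finset MvPolynomial

/-- The reduction mod `p` of the polynomial
`f_T = ∑ w_{ij} X^i Y^j (X-1)(Y-1) ∈ ℤ[X,Y]` of a lattice tile with weights `w`
supported in `ℕ × ℕ` (here `X = X 0`, `Y = X 1`). -/
noncomputable def firstQuadrantPolyMod (p : ℕ) (w : ℤ × ℤ →₀ ℤ) :
    MvPolynomial (Fin 2) (ZMod p) :=
  w.sum fun ij a =>
    C (a : ZMod p) * X 0 ^ ij.1.toNat * X 1 ^ ij.2.toNat * (X 0 - 1) * (X 1 - 1)

noncomputable def Dm (a b : ℕ) : Fin 2 →₀ ℕ :=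
  Finsupp.single 0 a + Finsupp.single 1 b

lemma Dm_apply0 (a b : ℕ) : Dm a b 0 = a := by
  simp [Dm, Finsupp.single_apply]

lemma Dm_apply1 (a b : ℕ) : Dm a b 1 = b := by
  simp [Dm, Finsupp.single_apply]

lemma eq_Dm_self (d : Fin 2 →₀ ℕ) : d = Dm (d 0) (d 1) := by
  ext i
  fin_cases i
  · simp [Dm_apply0]
  · simp [Dm_apply1]

lemma Dm_eq_iff {a b a' b' : ℕ} : Dm a b = Dm a' b' ↔ (a = a' ∧ b = b') := by
  constructor
  · intro h
    constructor
    · have := congrArg (fun f : Fin 2 →₀ ℕ => f 0) h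
      simpa [Dm_apply0] using this
    · have := congrArg (fun f : Fin 2 →₀ ℕ => f 1) h
      simpa [Dm_apply1] using this
  · rintro ⟨rfl, rfl⟩; rfl

lemma XaXb {R : Type*} [CommSemiring R] (a b : ℕ) :
    (X 0 ^ a * X 1 ^ b : MvPolynomial (Fin 2) R) = monomial (Dm a b) 1 := by
  rw [X_pow_eq_monomial, X_pow_eq_monomial, monomial_mul, one_mul]
  rfl

lemma CXaXb {R : Type*} [CommSemiring R] (r : R) (a b : ℕ) :
    (C r * X 0 ^ a * X 1 ^ b : MvPolynomial (Fin 2) R) = monomial (Dm a b) r := by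
  rw [mul_assoc, XaXb, C_mul_monomial, mul_one]

lemma term_eq {R : Type*} [CommRing R] (r : R) (i j : ℕ) :
    (C r * X 0 ^ i * X 1 ^ j * (X 0 - 1) * (X 1 - 1) : MvPolynomial (Fin 2) R)
      = monomial (Dm (i+1) (j+1)) r - monomial (Dm (i+1) j) r
        - monomial (Dm i (j+1)) r + monomial (Dm i j) r := by
  have h1 : ∀ a b : ℕ, (C r * X 0 ^ a * X 1 ^ b : MvPolynomial (Fin 2) R)
      = monomial (Dm a b) r := CXaXb r
  calc (C r * X 0 ^ i * X 1 ^ j * (X 0 - 1) * (X 1 - 1) : MvPolynomial (Fin 2) R)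
      = C r * X 0 ^ (i+1) * X 1 ^ (j+1) - C r * X 0 ^ (i+1) * X 1 ^ j
        - C r * X 0 ^ i * X 1 ^ (j+1) + C r * X 0 ^ i * X 1 ^ j := by ring
    _ = _ := by rw [h1, h1, h1, h1]

lemma line_finite {M : Type*} [Zero M] (f : ℤ × ℤ →₀ M) (a b c d : ℤ) (hc : c ≠ 0) :
    (Function.support fun r : ℤ => f (a + r * c, b + r * d)).Finite := by
  have hinj : Function.Injective (fun r : ℤ => ((a + r * c, b + r * d) : ℤ × ℤ)) := by
    intro r r' h
    have h1 : a + r * c = a + r' * c := congrArg Prod.fst h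
    have : r * c = r' * c := by omega
    exact mul_right_cancel₀ hc this
  have : (Function.support fun r : ℤ => f (a + r * c, b + r * d)) ⊆
      (fun r : ℤ => ((a + r * c, b + r * d) : ℤ × ℤ)) ⁻¹' ↑f.support := by
    intro r hr
    simp only [Function.mem_support] at hr
    simp [Finsupp.mem_support_iff, hr]
  exact Set.Finite.subset (Set.Finite.preimage hinj.injOn f.support.finite_toSet) this

lemma ind_sum (p : ℕ) (w : ℤ × ℤ →₀ ℤ) (hsupp : ∀ q ∈ w.support, 0 ≤ q.1 ∧ 0 ≤ q.2)
    (s t : ℕ) (a b : ℕ) :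
    (∑ q ∈ w.support, if (q.1.toNat + s = a ∧ q.2.toNat + t = b) then ((w q : ℤ) : ZMod p) else 0)
      = ((w ((a : ℤ) - s, (b : ℤ) - t) : ℤ) : ZMod p) := by
  classical
  have hcong : ∀ q ∈ w.support,
      (if (q.1.toNat + s = a ∧ q.2.toNat + t = b) then ((w q : ℤ) : ZMod p) else 0)
        = if q = (((a : ℤ) - s, (b : ℤ) - t) : ℤ × ℤ) then ((w q : ℤ) : ZMod p) else 0 := by
    intro q hq
    obtain ⟨h1, h2⟩ := hsupp q hq
    have hiff : (q.1.toNat + s = a ∧ q.2.toNat + t = b) ↔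
        q = (((a : ℤ) - s, (b : ℤ) - t) : ℤ × ℤ) := by
      rw [Prod.ext_iff]
      constructor
      · rintro ⟨ha, hb⟩; constructor <;> simp <;> omega
      · rintro ⟨ha, hb⟩; simp at ha hb; omega
    simp only [hiff]
  rw [Finset.sum_congr rfl hcong, Finset.sum_ite_eq' w.support]
  by_cases h : (((a : ℤ) - s, (b : ℤ) - t) : ℤ × ℤ) ∈ w.support
  · simp [h]
  · rw [if_neg h]
    rw [Finsupp.notMem_support_iff] at h
    simp [h]

lemma coeff_fqpm (p : ℕ) (w : ℤ × ℤ →₀ ℤ) (hsupp : ∀ q ∈ w.support, 0 ≤ q.1 ∧ 0 ≤ q.2)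
    (a b : ℕ) :
    MvPolynomial.coeff (Dm a b) (firstQuadrantPolyMod p w)
      = ((w ((a : ℤ) - 1, (b : ℤ) - 1) : ℤ) : ZMod p)
        - ((w ((a : ℤ) - 1, (b : ℤ)) : ℤ) : ZMod p)
        - ((w ((a : ℤ), (b : ℤ) - 1) : ℤ) : ZMod p)
        + ((w ((a : ℤ), (b : ℤ)) : ℤ) : ZMod p) := by
  classical
  rw [firstQuadrantPolyMod, Finsupp.sum, MvPolynomial.coeff_sum]
  have hterm : ∀ q ∈ w.support,
      MvPolynomial.coeff (Dm a b)
        (C ((w q : ℤ) : ZMod p) * X 0 ^ q.1.toNat * X 1 ^ q.2.toNat * (X 0 - 1) * (X 1 - 1))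
      = (if (q.1.toNat + 1 = a ∧ q.2.toNat + 1 = b) then ((w q : ℤ) : ZMod p) else 0)
        - (if (q.1.toNat + 1 = a ∧ q.2.toNat + 0 = b) then ((w q : ℤ) : ZMod p) else 0)
        - (if (q.1.toNat + 0 = a ∧ q.2.toNat + 1 = b) then ((w q : ℤ) : ZMod p) else 0)
        + (if (q.1.toNat + 0 = a ∧ q.2.toNat + 0 = b) then ((w q : ℤ) : ZMod p) else 0) := by
    intro q hq
    rw [term_eq, coeff_add, coeff_sub, coeff_sub, coeff_monomial, coeff_monomial,
      coeff_monomial, coeff_monomial]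
    congr 3 <;> simp only [Dm_eq_iff, Nat.add_zero]
  rw [Finset.sum_congr rfl hterm]
  rw [Finset.sum_add_distrib, Finset.sum_sub_distrib, Finset.sum_sub_distrib]
  rw [ind_sum p w hsupp 1 1, ind_sum p w hsupp 1 0, ind_sum p w hsupp 0 1,
    ind_sum p w hsupp 0 0]
  norm_num

set_option maxHeartbeats 1600000

/-- Char-`p` analogue: let `K` be an algebraically closed field of
characteristic `p`, and `T` a ℤ-weighted lattice tile in the first quadrant
such that for all coprime nonzero `c, d` the weighted areas of the
`(-c/d)`-slope classes of `T` are not all divisible by `p`.  If `m, n` are the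
`X`- and `Y`-degrees of the reduction `f̄_T ∈ 𝔽_p[X,Y]` and `α, β ∈ K^×`
satisfy `f̄_T(α^k, β^k) = 0` for all `k ≥ 1`, then `α^k = 1` or `β^k = 1` for
some `1 ≤ k ≤ 2mn`. -/
theorem common_zeros_near_roots_of_unity_char_p
    (p : ℕ) (hp : p.Prime)
    (K : Type*) [Field K] [IsAlgClosed K] [CharP K p]
    (w : ℤ × ℤ →₀ ℤ)
    (hsupp : ∀ q ∈ w.support, 0 ≤ q.1 ∧ 0 ≤ q.2)
    (hslope : ∀ c d : ℤ, c ≠ 0 → d ≠ 0 → IsCoprime c d →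
      ∃ i j : ℤ, ¬ ((p : ℤ) ∣ ∑ᶠ r : ℤ, w (i + r * d, j - r * c)))
    (m n : ℕ)
    (hm : m = (firstQuadrantPolyMod p w).degreeOf 0)
    (hn : n = (firstQuadrantPolyMod p w).degreeOf 1)
    (α β : K) (hα : α ≠ 0) (hβ : β ≠ 0)
    (hzero : ∀ k : ℕ, 1 ≤ k →
      eval₂ (ZMod.castHom (dvd_refl p) K) ![α ^ k, β ^ k]
        (firstQuadrantPolyMod p w) = 0) :
    (∃ k : ℕ, 1 ≤ k ∧ k ≤ 2 * m * n ∧ α ^ k = 1) ∨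
      (∃ k : ℕ, 1 ≤ k ∧ k ≤ 2 * m * n ∧ β ^ k = 1) := by
  classical
  by_contra hcon
  push_neg at hcon
  obtain ⟨hA', hB'⟩ := hcon
  haveI : Fact p.Prime := ⟨hp⟩
  set F := firstQuadrantPolyMod p w with hFdef
  set φ := ZMod.castHom (dvd_refl p) K with hφdef
  have hφinj : Function.Injective φ := φ.injective
  set a : Kˣ := Units.mk0 α hα with hadef
  set b : Kˣ := Units.mk0 β hβ with hbdef
  -- no small root of unity, in ℤ-power form
  have Conc : ∀ (x : Kˣ), (∀ k : ℕ, 1 ≤ k → k ≤ 2 * m * n → (x : K) ^ k ≠ 1) →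
      ∀ t : ℤ, t ≠ 0 → |t| ≤ (2 * m * n : ℤ) → x ^ t ≠ 1 := by
    intro x hx t ht hle h1
    have h2 : x ^ (t.natAbs) = 1 := by
      rcases Int.natAbs_eq t with h | h
      · rw [← zpow_natCast, ← h, h1]
      · have : x ^ (-(t.natAbs : ℤ)) = 1 := by rw [← h, h1]
        rw [zpow_neg, inv_eq_one, zpow_natCast] at this
        exact this
    have h3 : (x : K) ^ t.natAbs = 1 := by
      have := congrArg (Units.val) h2
      simpa using this
    have hpos : 1 ≤ t.natAbs := by
      rcases Int.natAbs_eq_zero.not.2 ht with h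
      omega
    have hle' : t.natAbs ≤ 2 * m * n := by
      rw [Int.abs_eq_natAbs] at hle
      exact_mod_cast hle
    exact hx t.natAbs hpos hle' h3
  have ConcA : ∀ t : ℤ, t ≠ 0 → |t| ≤ (2 * m * n : ℤ) → a ^ t ≠ 1 :=
    Conc a (by simpa [hadef] using hA')
  have ConcB : ∀ t : ℤ, t ≠ 0 → |t| ≤ (2 * m * n : ℤ) → b ^ t ≠ 1 :=
    Conc b (by simpa [hbdef] using hB')
  -- cast weight function
  set Wc : ℤ × ℤ → ZMod p := fun q => ((w q : ℤ) : ZMod p) with hWcdef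
  have Wmem : ∀ q : ℤ × ℤ, Wc q ≠ 0 → q ∈ w.support := by
    intro q hq
    rw [Finsupp.mem_support_iff]
    intro h0
    apply hq
    rw [hWcdef]; simp only [h0, Int.cast_zero]
  have Wc_zero_of_neg : ∀ q : ℤ × ℤ, (q.1 < 0 ∨ q.2 < 0) → Wc q = 0 := by
    intro q hq
    by_contra h
    obtain ⟨h1, h2⟩ := hsupp q (Wmem q h)
    omega
  -- the finsum-dvd bridge
  have bridge : ∀ (i j c d : ℤ), c ≠ 0 →
      ((∑ᶠ r : ℤ, w (i + r * c, j + r * d) : ℤ) : ZMod p)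
        = ∑ᶠ r : ℤ, Wc (i + r * c, j + r * d) := by
    intro i j c d hc
    exact (Int.castAddHom (ZMod p)).map_finsum (line_finite w i j c d hc)
  -- a support point of maximal coordinate sum
  have hW0 : ∃ q : ℤ × ℤ, Wc q ≠ 0 := by
    by_contra h
    push_neg at h
    obtain ⟨i, j, hnd⟩ := hslope 1 1 one_ne_zero one_ne_zero isCoprime_one_left
    apply hnd
    have hfun : (fun r : ℤ => w (i + r * 1, j - r * 1)) = fun r : ℤ => w (i + r * 1, j + r * (-1)) := by
      funext r
      have : j - r * 1 = j + r * (-1) := by ring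
      rw [this]
    rw [show (∑ᶠ r : ℤ, w (i + r * 1, j - r * 1)) = ∑ᶠ r : ℤ, w (i + r * 1, j + r * (-1)) from by
      rw [hfun]]
    rw [← ZMod.intCast_zmod_eq_zero_iff_dvd]
    rw [bridge i j 1 (-1) one_ne_zero]
    simp only [h]
    exact finsum_zero
  obtain ⟨q₀, hq₀mem, hq₀ne, hq₀max⟩ :
      ∃ q₀ : ℤ × ℤ, q₀ ∈ w.support ∧ Wc q₀ ≠ 0 ∧
        ∀ q : ℤ × ℤ, Wc q ≠ 0 → q.1 + q.2 ≤ q₀.1 + q₀.2 := by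
    set T : Finset (ℤ × ℤ) := w.support.filter (fun q => Wc q ≠ 0) with hT
    have hTne : T.Nonempty := by
      obtain ⟨q, hq⟩ := hW0
      exact ⟨q, by rw [hT, Finset.mem_filter]; exact ⟨Wmem q hq, hq⟩⟩
    obtain ⟨q₀, hq₀T, hq₀max⟩ := T.exists_max_image (fun q => q.1 + q.2) hTne
    rw [hT, Finset.mem_filter] at hq₀T
    refine ⟨q₀, hq₀T.1, hq₀T.2, ?_⟩
    intro q hq
    exact hq₀max q (by rw [hT, Finset.mem_filter]; exact ⟨Wmem q hq, hq⟩)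
  obtain ⟨hq₀1, hq₀2⟩ := hsupp q₀ hq₀mem
  set a₀ : ℕ := q₀.1.toNat + 1 with ha₀def
  set b₀ : ℕ := q₀.2.toNat + 1 with hb₀def
  have hcoeffstar : MvPolynomial.coeff (Dm a₀ b₀) F = Wc q₀ := by
    rw [hFdef, coeff_fqpm p w hsupp a₀ b₀]
    have e1 : ((a₀ : ℤ) - 1) = q₀.1 := by
      rw [ha₀def]; push_cast [Int.toNat_of_nonneg hq₀1]; ring
    have e2 : ((b₀ : ℤ) - 1) = q₀.2 := by
      rw [hb₀def]; push_cast [Int.toNat_of_nonneg hq₀2]; ring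
    have e3 : (a₀ : ℤ) = q₀.1 + 1 := by omega
    have e4 : (b₀ : ℤ) = q₀.2 + 1 := by omega
    rw [e1, e2, e3, e4]
    have z1 : Wc (q₀.1, q₀.2 + 1) = 0 := by
      by_contra h
      have h2 : q₀.1 + (q₀.2 + 1) ≤ q₀.1 + q₀.2 := hq₀max (q₀.1, q₀.2 + 1) h
      omega
    have z2 : Wc (q₀.1 + 1, q₀.2) = 0 := by
      by_contra h
      have h2 : q₀.1 + 1 + (q₀.2) ≤ q₀.1 + q₀.2 := hq₀max (q₀.1 + 1, q₀.2) h
      omega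
    have z3 : Wc (q₀.1 + 1, q₀.2 + 1) = 0 := by
      by_contra h
      have h2 : q₀.1 + 1 + (q₀.2 + 1) ≤ q₀.1 + q₀.2 := hq₀max (q₀.1 + 1, q₀.2 + 1) h
      omega
    have hq : ((q₀.1 : ℤ), (q₀.2 : ℤ)) = q₀ := rfl
    rw [hWcdef] at z1 z2 z3 ⊢
    simp only at z1 z2 z3 ⊢
    rw [hq, z1, z2, z3]
    ring
  have hdstar : Dm a₀ b₀ ∈ F.support := by
    rw [MvPolynomial.mem_support_iff, hcoeffstar]; exact hq₀ne
  have hbound : ∀ d ∈ F.support, d 0 ≤ m ∧ d 1 ≤ n := by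
    intro d hd
    exact ⟨hm ▸ MvPolynomial.monomial_le_degreeOf 0 hd,
      hn ▸ MvPolynomial.monomial_le_degreeOf 1 hd⟩
  have hm1 : 1 ≤ m := by
    have := (hbound _ hdstar).1
    rw [Dm_apply0] at this; omega
  have hn1 : 1 ≤ n := by
    have := (hbound _ hdstar).2
    rw [Dm_apply1] at this; omega
  -- the fiber map
  set θ : (Fin 2 →₀ ℕ) → K := fun d => α ^ (d 0) * β ^ (d 1) with hθdef
  have θ_ne : ∀ d, θ d ≠ 0 := fun d =>
    mul_ne_zero (pow_ne_zero _ hα) (pow_ne_zero _ hβ)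
  -- Step V : fiber sums vanish
  set Γ : Finset K := F.support.image θ with hΓ
  have hLI : LinearIndependent K (fun γ : K => ⇑(powersHom K γ)) :=
    (linearIndependent_monoidHom (Multiplicative ℕ) K).comp
      (powersHom K) (powersHom K).injective
  set Cφ : K → K := fun γ' => φ (∑ d ∈ F.support.filter (fun d => θ d = γ'),
      MvPolynomial.coeff d F) with hCφ
  have hsum : (∑ γ' ∈ Γ, (Cφ γ' * γ') • ⇑(powersHom K γ')) = 0 := by
    funext x
    set k : ℕ := Multiplicative.toAdd x + 1 with hk
    have hev := hzero k (by omega)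
    rw [MvPolynomial.eval₂_eq'] at hev
    have hprod : ∀ d : Fin 2 →₀ ℕ,
        (∏ i : Fin 2, (![α ^ k, β ^ k] : Fin 2 → K) i ^ d i) = θ d ^ k := by
      intro d
      rw [Fin.prod_univ_two]
      simp only [Matrix.cons_val_zero, Matrix.cons_val_one, Matrix.head_cons]
      rw [hθdef]
      simp only [mul_pow, ← pow_mul]
      rw [mul_comm k (d 0), mul_comm k (d 1)]
    have hev2 : (∑ d ∈ F.support, φ (MvPolynomial.coeff d F) * θ d ^ k) = 0 := by
      rw [← hev]
      exact Finset.sum_congr rfl (fun d _ => by rw [hprod d])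
    have hfib : (∑ γ' ∈ Γ, Cφ γ' * γ' ^ k)
        = ∑ d ∈ F.support, φ (MvPolynomial.coeff d F) * θ d ^ k := by
      rw [← Finset.sum_fiberwise_of_maps_to (g := θ)
        (fun d hd => Finset.mem_image_of_mem θ hd)
        (fun d => φ (MvPolynomial.coeff d F) * θ d ^ k)]
      refine Finset.sum_congr rfl (fun γ' _ => ?_)
      rw [hCφ]
      simp only [map_sum]
      rw [Finset.sum_mul]
      refine Finset.sum_congr rfl (fun d hd => ?_)
      rw [(Finset.mem_filter.1 hd).2]
    have : (∑ γ' ∈ Γ, (Cφ γ' * γ') • ⇑(powersHom K γ')) x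
        = ∑ γ' ∈ Γ, Cφ γ' * γ' ^ k := by
      rw [Finset.sum_apply]
      refine Finset.sum_congr rfl (fun γ' _ => ?_)
      rw [Pi.smul_apply, smul_eq_mul, powersHom_apply, hk, pow_succ]
      ring
    rw [this, hfib, hev2]
    rfl
  have StepV : ∀ γ : K,
      (∑ d ∈ F.support.filter (fun d => θ d = γ), MvPolynomial.coeff d F) = 0 := by
    intro γ
    by_cases hγ : γ ∈ Γ
    · have key := linearIndependent_iff'.1 hLI Γ (fun γ' => Cφ γ' * γ') hsum γ hγ
      have hγ0 : γ ≠ 0 := by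
        obtain ⟨d, _, rfl⟩ := Finset.mem_image.1 hγ
        exact θ_ne d
      have hCγ : Cφ γ = 0 := by
        rcases mul_eq_zero.1 key with h | h
        · exact h
        · exact absurd h hγ0
      apply hφinj
      rw [map_zero]
      exact hCγ
    · have hempty : F.support.filter (fun d => θ d = γ) = ∅ := by
        rw [Finset.filter_eq_empty_iff]
        intro d hd hpd
        exact hγ (hpd ▸ Finset.mem_image_of_mem θ hd)
      rw [hempty, Finset.sum_empty]
  -- Step E : two distinct support points in the same fiber
  obtain ⟨d', hd'mem, hθ', hne'⟩ :
      ∃ d', d' ∈ F.support ∧ θ d' = θ (Dm a₀ b₀) ∧ d' ≠ Dm a₀ b₀ := by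
    by_contra h
    push_neg at h
    have hfil : F.support.filter (fun d => θ d = θ (Dm a₀ b₀)) = {Dm a₀ b₀} := by
      apply Finset.eq_singleton_iff_unique_mem.2
      constructor
      · exact Finset.mem_filter.2 ⟨hdstar, rfl⟩
      · intro d hd
        obtain ⟨hd1, hd2⟩ := Finset.mem_filter.1 hd
        by_contra hne
        exact hne (h d hd1 hd2)
    have := StepV (θ (Dm a₀ b₀))
    rw [hfil, Finset.sum_singleton, hcoeffstar] at this
    exact hq₀ne this
  have valθ : ∀ d : Fin 2 →₀ ℕ, ((a ^ ((d 0 : ℤ)) * b ^ ((d 1 : ℤ)) : Kˣ) : K) = θ d := by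
    intro d
    rw [hθdef]
    push_cast [hadef, hbdef]
    norm_num
  -- relation from a fiber collision
  have rel : ∀ d d' : Fin 2 →₀ ℕ, θ d = θ d' →
      a ^ ((d 0 : ℤ) - (d' 0 : ℤ)) * b ^ ((d 1 : ℤ) - (d' 1 : ℤ)) = 1 := by
    intro d d' h
    have hu : (a ^ ((d 0 : ℤ)) * b ^ ((d 1 : ℤ)) : Kˣ)
        = a ^ ((d' 0 : ℤ)) * b ^ ((d' 1 : ℤ)) := by
      apply Units.ext
      rw [valθ, valθ, h]
    rw [zpow_sub, zpow_sub, mul_mul_mul_comm, ← mul_inv, hu, mul_inv_cancel]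
  set u : ℤ := ((Dm a₀ b₀) 0 : ℤ) - (d' 0 : ℤ) with hudef
  set v : ℤ := ((Dm a₀ b₀) 1 : ℤ) - (d' 1 : ℤ) with hvdef
  have huv : a ^ u * b ^ v = 1 := rel _ _ hθ'.symm
  have hunz : ¬(u = 0 ∧ v = 0) := by
    rintro ⟨h1, h2⟩
    apply hne'
    rw [hudef] at h1
    rw [hvdef] at h2
    have e1 : d' 0 = (Dm a₀ b₀) 0 := by omega
    have e2 : d' 1 = (Dm a₀ b₀) 1 := by omega
    rw [eq_Dm_self d', e1, e2, ← eq_Dm_self]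
  have hub : |u| ≤ (m : ℤ) := by
    have h1 := (hbound _ hdstar).1
    have h2 := (hbound _ hd'mem).1
    rw [hudef, abs_le]
    omega
  have hvb : |v| ≤ (n : ℤ) := by
    have h1 := (hbound _ hdstar).2
    have h2 := (hbound _ hd'mem).2
    rw [hvdef, abs_le]
    omega
  have relNonzero : ∀ u' v' : ℤ, a ^ u' * b ^ v' = 1 → ¬(u' = 0 ∧ v' = 0) →
      |u'| ≤ (m : ℤ) → |v'| ≤ (n : ℤ) → u' ≠ 0 ∧ v' ≠ 0 := by
    intro u' v' h hnz hub' hvb'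
    constructor
    · intro h0
      rw [h0, zpow_zero, one_mul] at h
      have hv0 : v' ≠ 0 := fun hv0 => hnz ⟨h0, hv0⟩
      refine ConcB v' hv0 ?_ h
      calc |v'| ≤ (n : ℤ) := hvb'
        _ ≤ (2 * m * n : ℤ) := by push_cast; nlinarith [hm1]
    · intro h0
      rw [h0, zpow_zero, mul_one] at h
      have hu0 : u' ≠ 0 := fun hu0 => hnz ⟨hu0, h0⟩
      refine ConcA u' hu0 ?_ h
      calc |u'| ≤ (m : ℤ) := hub'
        _ ≤ (2 * m * n : ℤ) := by push_cast; nlinarith [hn1]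
  obtain ⟨hu, hv⟩ := relNonzero u v huv hunz hub hvb
  have collin : ∀ u' v' : ℤ, a ^ u' * b ^ v' = 1 → |u'| ≤ (m : ℤ) → |v'| ≤ (n : ℤ) →
      u * v' = u' * v := by
    intro u' v' h' hub' hvb'
    by_contra hD
    have hD0 : u * v' - u' * v ≠ 0 := fun h0 => hD (by omega)
    have h1 : a ^ (u * v') * b ^ (v * v') = 1 := by
      have := congrArg (· ^ v') huv
      simpa [mul_zpow, ← zpow_mul] using this
    have h2 : a ^ (u' * v) * b ^ (v' * v) = 1 := by
      have := congrArg (· ^ v) h'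
      simpa [mul_zpow, ← zpow_mul] using this
    have h3 : a ^ (u * v' - u' * v) = 1 := by
      rw [zpow_sub]
      rw [mul_comm v' v] at h2
      have hb1 : b ^ (v * v') = (a ^ (u * v'))⁻¹ := by
        rw [eq_inv_iff_mul_eq_one, mul_comm]; exact h1
      have hb2 : b ^ (v * v') = (a ^ (u' * v))⁻¹ := by
        rw [eq_inv_iff_mul_eq_one, mul_comm]; exact h2
      rw [hb1] at hb2
      rw [mul_inv_eq_one]
      exact inv_injective hb2
    refine ConcA _ hD0 ?_ h3
    calc |u * v' - u' * v| ≤ |u * v'| + |u' * v| := abs_sub _ _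
      _ ≤ (m : ℤ) * n + (m : ℤ) * n := by
          rw [abs_mul, abs_mul]
          have h4 : |u| * |v'| ≤ (m : ℤ) * n :=
            mul_le_mul hub hvb' (abs_nonneg _) (by positivity)
          have h5 : |u'| * |v| ≤ (m : ℤ) * n :=
            mul_le_mul hub' hvb (abs_nonneg _) (by positivity)
          linarith
      _ = (2 * m * n : ℤ) := by push_cast; ring
  -- primitive direction
  set g : ℤ := (Int.gcd u v : ℤ) with hgdef
  have hg0 : g ≠ 0 := by
    rw [hgdef]
    simp only [ne_eq, Nat.cast_eq_zero]
    rw [Int.gcd_eq_zero_iff]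
    rintro ⟨h1, h2⟩
    exact hu h1
  set e₁ : ℤ := u / g with he₁def
  set e₂ : ℤ := v / g with he₂def
  have hge₁ : g * e₁ = u := by
    rw [he₁def]
    exact Int.mul_ediv_cancel' (Int.gcd_dvd_left u v)
  have hge₂ : g * e₂ = v := by
    rw [he₂def]
    exact Int.mul_ediv_cancel' (Int.gcd_dvd_right u v)
  have he₁0 : e₁ ≠ 0 := by
    intro h0
    rw [h0, mul_zero] at hge₁
    exact hu hge₁.symm
  have he₂0 : e₂ ≠ 0 := by
    intro h0
    rw [h0, mul_zero] at hge₂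
    exact hv hge₂.symm
  have hcop : IsCoprime e₁ e₂ := by
    rw [Int.isCoprime_iff_gcd_eq_one, he₁def, he₂def, hgdef]
    exact Int.gcd_div_gcd_div_gcd (Int.gcd_pos_of_ne_zero_left v hu)
  -- collinearity of fiber collisions with e
  have collin_e : ∀ d d' : Fin 2 →₀ ℕ, d ∈ F.support → d' ∈ F.support → θ d = θ d' →
      ∃ t : ℤ, (d 0 : ℤ) - (d' 0 : ℤ) = t * e₁ ∧ (d 1 : ℤ) - (d' 1 : ℤ) = t * e₂ := by
    intro d d2 hd hd2 hθdd
    set u' : ℤ := (d 0 : ℤ) - (d2 0 : ℤ) with hu'def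
    set v' : ℤ := (d 1 : ℤ) - (d2 1 : ℤ) with hv'def
    have hrel := rel d d2 hθdd
    have hub' : |u'| ≤ (m : ℤ) := by
      have h1 := (hbound _ hd).1
      have h2 := (hbound _ hd2).1
      rw [hu'def, abs_le]; omega
    have hvb' : |v'| ≤ (n : ℤ) := by
      have h1 := (hbound _ hd).2
      have h2 := (hbound _ hd2).2
      rw [hv'def, abs_le]; omega
    have hcol : u * v' = u' * v := collin u' v' hrel hub' hvb'
    have h1 : g * (e₁ * v') = g * (e₂ * u') := by
      calc g * (e₁ * v') = u * v' := by rw [← mul_assoc, hge₁]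
        _ = u' * v := hcol
        _ = g * (e₂ * u') := by rw [← hge₂]; ring
    have h2 : e₁ * v' = e₂ * u' := mul_left_cancel₀ hg0 h1
    have hdvd : e₁ ∣ u' * e₂ := ⟨v', by rw [mul_comm u' e₂, ← h2]⟩
    obtain ⟨t, ht⟩ := hcop.dvd_of_dvd_mul_right hdvd
    have hv' : v' = t * e₂ := by
      have h3 : e₁ * v' = e₁ * (t * e₂) := by rw [h2, ht]; ring
      exact mul_left_cancel₀ he₁0 h3
    exact ⟨t, by rw [ht]; ring, hv'⟩
  -- line sums
  set LS : ℤ → ℤ → ZMod p := fun i j => ∑ᶠ r : ℤ, Wc (i + r * e₁, j + r * e₂) with hLSdef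
  have lineFinW : ∀ (i j : ℤ),
      (Function.support fun r : ℤ => Wc (i + r * e₁, j + r * e₂)).Finite := by
    intro i j
    refine Set.Finite.subset (line_finite w i j e₁ e₂ he₁0) ?_
    intro r hr
    simp only [Function.mem_support] at hr ⊢
    intro h0
    exact hr (by rw [hWcdef]; simp only [h0, Int.cast_zero])
  set cz : ℤ → ℤ → ZMod p :=
    fun x y => Wc (x-1, y-1) - Wc (x-1, y) - Wc (x, y-1) + Wc (x, y) with hczdef
  have hcz_coeff : ∀ a' b' : ℕ, MvPolynomial.coeff (Dm a' b') F = cz (a' : ℤ) (b' : ℤ) := by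
    intro a' b'
    rw [hFdef, coeff_fqpm p w hsupp a' b', hczdef]
  have hcz_neg : ∀ x y : ℤ, (x < 0 ∨ y < 0) → cz x y = 0 := by
    intro x y h
    rw [hczdef]
    simp only
    rw [Wc_zero_of_neg _ (by simp; omega), Wc_zero_of_neg _ (by simp; omega),
      Wc_zero_of_neg _ (by simp; omega), Wc_zero_of_neg _ (by simp; omega)]
    ring
  have hcz_mem : ∀ x y : ℤ, cz x y ≠ 0 → 0 ≤ x ∧ 0 ≤ y ∧
      Dm x.toNat y.toNat ∈ F.support ∧ MvPolynomial.coeff (Dm x.toNat y.toNat) F = cz x y := by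
    intro x y h
    have hx : 0 ≤ x := by
      by_contra h0
      exact h (hcz_neg _ _ (Or.inl (by omega)))
    have hy : 0 ≤ y := by
      by_contra h0
      exact h (hcz_neg _ _ (Or.inr (by omega)))
    have hc := hcz_coeff x.toNat y.toNat
    rw [Int.toNat_of_nonneg hx, Int.toNat_of_nonneg hy] at hc
    exact ⟨hx, hy, MvPolynomial.mem_support_iff.2 (by rw [hc]; exact h), hc⟩
  have ClaimAcz : ∀ i j : ℤ, (∑ᶠ r : ℤ, cz (i + r * e₁) (j + r * e₂)) = 0 := by
    intro i j
    set P : (Fin 2 →₀ ℕ) → Prop :=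
      fun d => ∃ r : ℤ, (d 0 : ℤ) = i + r * e₁ ∧ (d 1 : ℤ) = j + r * e₂ with hP
    set sF := F.support.filter P with hsF
    set ρ : (Fin 2 →₀ ℕ) → ℤ := fun d => ((d 0 : ℤ) - i) / e₁ with hρ
    have hρ_eq : ∀ (d : Fin 2 →₀ ℕ) (r : ℤ), (d 0 : ℤ) = i + r * e₁ → ρ d = r := by
      intro d r h
      rw [hρ]
      simp only
      rw [h, show i + r * e₁ - i = r * e₁ from by ring, Int.mul_ediv_cancel _ he₁0]
    have hmemr : ∀ r : ℤ, cz (i + r * e₁) (j + r * e₂) ≠ 0 →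
        ∃ d, d ∈ sF ∧ ρ d = r ∧ MvPolynomial.coeff d F = cz (i + r * e₁) (j + r * e₂) := by
      intro r h
      obtain ⟨hx, hy, hmem, hval⟩ := hcz_mem _ _ h
      refine ⟨Dm (i + r*e₁).toNat (j + r*e₂).toNat, ?_, ?_, hval⟩
      · rw [hsF, Finset.mem_filter]
        refine ⟨hmem, ?_⟩
        rw [hP]
        exact ⟨r, by rw [Dm_apply0, Int.toNat_of_nonneg hx],
          by rw [Dm_apply1, Int.toNat_of_nonneg hy]⟩
      · apply hρ_eq
        rw [Dm_apply0, Int.toNat_of_nonneg hx]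
    have hsupp_sub : (Function.support fun r : ℤ => cz (i + r * e₁) (j + r * e₂))
        ⊆ ↑(sF.image ρ) := by
      intro r hr
      obtain ⟨d, hd, hρd, _⟩ := hmemr r hr
      exact Finset.mem_coe.2 (Finset.mem_image.2 ⟨d, hd, hρd⟩)
    rw [finsum_eq_sum_of_support_subset _ hsupp_sub]
    have hinj : ∀ x ∈ sF, ∀ y ∈ sF, ρ x = ρ y → x = y := by
      intro d hd d2 hd2 hcc
      obtain ⟨r1, h11, h12⟩ := (Finset.mem_filter.1 hd).2
      obtain ⟨r2, h21, h22⟩ := (Finset.mem_filter.1 hd2).2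
      rw [hρ_eq d r1 h11, hρ_eq d2 r2 h21] at hcc
      subst hcc
      have e0 : d 0 = d2 0 := by
        have : (d 0 : ℤ) = (d2 0 : ℤ) := by rw [h11, h21]
        exact_mod_cast this
      have e1 : d 1 = d2 1 := by
        have : (d 1 : ℤ) = (d2 1 : ℤ) := by rw [h12, h22]
        exact_mod_cast this
      rw [eq_Dm_self d, e0, e1, ← eq_Dm_self]
    rw [Finset.sum_image hinj]
    have hcongr : ∀ d ∈ sF,
        cz (i + ρ d * e₁) (j + ρ d * e₂) = MvPolynomial.coeff d F := by
      intro d hd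
      obtain ⟨r1, h11, h12⟩ := (Finset.mem_filter.1 hd).2
      rw [hρ_eq d r1 h11, ← h11, ← h12]
      have := hcz_coeff (d 0) (d 1)
      rw [← eq_Dm_self] at this
      exact this.symm
    rw [Finset.sum_congr rfl hcongr]
    rw [← Finset.sum_fiberwise_of_maps_to (g := θ) (t := sF.image θ)
      (fun d hd => Finset.mem_image_of_mem θ hd) (fun d => MvPolynomial.coeff d F)]
    refine Finset.sum_eq_zero (fun γ hγ => ?_)
    have hfeq : sF.filter (fun d => θ d = γ) = F.support.filter (fun d => θ d = γ) := by
      apply Finset.Subset.antisymm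
      · intro d hd
        obtain ⟨hd1, hd2⟩ := Finset.mem_filter.1 hd
        exact Finset.mem_filter.2 ⟨(Finset.mem_filter.1 hd1).1, hd2⟩
      · intro d hd
        obtain ⟨hd1, hd2⟩ := Finset.mem_filter.1 hd
        obtain ⟨d₀, hd₀, hθ₀⟩ := Finset.mem_image.1 hγ
        obtain ⟨hd₀1, hd₀P⟩ := Finset.mem_filter.1 hd₀
        obtain ⟨r₀, h₀1, h₀2⟩ := hd₀P
        obtain ⟨t, ht1, ht2⟩ := collin_e d d₀ hd1 hd₀1 (by rw [hd2, hθ₀])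
        refine Finset.mem_filter.2 ⟨Finset.mem_filter.2 ⟨hd1, ?_⟩, hd2⟩
        rw [hP]
        refine ⟨r₀ + t, ?_, ?_⟩
        · have h5 : (d 0 : ℤ) = (d₀ 0 : ℤ) + t * e₁ := by linarith [ht1]
          rw [h5, h₀1]; ring
        · have h5 : (d 1 : ℤ) = (d₀ 1 : ℤ) + t * e₂ := by linarith [ht2]
          rw [h5, h₀2]; ring
    rw [hfeq]
    exact StepV γ
  have ClaimA : ∀ i j : ℤ, LS i j - LS (i-1) j - LS i (j-1) + LS (i-1) (j-1) = 0 := by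
    intro i j
    have h := ClaimAcz i j
    have e1 : ∀ r : ℤ, cz (i + r*e₁) (j + r*e₂)
        = Wc ((i-1) + r*e₁, (j-1) + r*e₂) - Wc ((i-1) + r*e₁, j + r*e₂)
          - Wc (i + r*e₁, (j-1) + r*e₂) + Wc (i + r*e₁, j + r*e₂) := by
      intro r
      rw [hczdef]
      simp only
      rw [show i + r*e₁ - 1 = (i-1) + r*e₁ from by ring,
        show j + r*e₂ - 1 = (j-1) + r*e₂ from by ring]
    rw [finsum_congr e1] at h
    have hfs1 : (Function.support fun r : ℤ =>
        Wc ((i-1) + r*e₁, (j-1) + r*e₂) - Wc ((i-1) + r*e₁, j + r*e₂)).Finite :=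
      ((lineFinW (i-1) (j-1)).union (lineFinW (i-1) j)).subset (Function.support_sub _ _)
    have hfs2 : (Function.support fun r : ℤ =>
        Wc ((i-1) + r*e₁, (j-1) + r*e₂) - Wc ((i-1) + r*e₁, j + r*e₂)
          - Wc (i + r*e₁, (j-1) + r*e₂)).Finite :=
      (hfs1.union (lineFinW i (j-1))).subset (Function.support_sub _ _)
    rw [finsum_add_distrib hfs2 (lineFinW i j), finsum_sub_distrib hfs1 (lineFinW i (j-1)),
      finsum_sub_distrib (lineFinW (i-1) (j-1)) (lineFinW (i-1) j)] at h
    rw [hLSdef]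
    linear_combination h
  have hvanish : ∀ i j : ℤ, (∀ q ∈ w.support, e₂ * q.1 - e₁ * q.2 ≠ e₂ * i - e₁ * j) →
      LS i j = 0 := by
    intro i j h
    show (∑ᶠ r : ℤ, Wc (i + r * e₁, j + r * e₂)) = 0
    have hz : ∀ r : ℤ, Wc (i + r * e₁, j + r * e₂) = 0 := by
      intro r
      by_contra h0
      have hmem := Wmem _ h0
      apply h _ hmem
      show e₂ * (i + r * e₁) - e₁ * (j + r * e₂) = e₂ * i - e₁ * j
      ring
    exact (finsum_congr hz).trans finsum_zero
  have avoid : ∀ (c : ℤ), c ≠ 0 → ∀ (x y : ℤ), ∃ z : ℤ,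
      (∀ q ∈ w.support, e₂ * q.1 - e₁ * q.2 ≠ c * z + x) ∧
      (∀ q ∈ w.support, e₂ * q.1 - e₁ * q.2 ≠ c * z + y) := by
    intro c hc x y
    set Sset : Finset ℤ := (w.support.image (fun q => e₂ * q.1 - e₁ * q.2 - x))
      ∪ (w.support.image (fun q => e₂ * q.1 - e₁ * q.2 - y)) with hSset
    have hinj : Function.Injective (fun z : ℤ => c * z) :=
      fun z z' h => mul_left_cancel₀ hc h
    have hfin : ((fun z : ℤ => c * z) ⁻¹' ↑Sset).Finite :=
      Set.Finite.preimage hinj.injOn Sset.finite_toSet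
    obtain ⟨z, hz⟩ := hfin.infinite_compl.nonempty
    rw [Set.mem_compl_iff, Set.mem_preimage, Finset.mem_coe] at hz
    refine ⟨z, ?_, ?_⟩
    · intro q hq heq
      apply hz
      rw [hSset, Finset.mem_union]
      left
      refine Finset.mem_image.2 ⟨q, hq, ?_⟩
      show e₂ * q.1 - e₁ * q.2 - x = c * z
      linarith [heq]
    · intro q hq heq
      apply hz
      rw [hSset, Finset.mem_union]
      right
      refine Finset.mem_image.2 ⟨q, hq, ?_⟩
      show e₂ * q.1 - e₁ * q.2 - y = c * z
      linarith [heq]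
  have Gconst : ∀ i j : ℤ, LS i j - LS i (j-1) = LS (i-1) j - LS (i-1) (j-1) := by
    intro i j
    linear_combination ClaimA i j
  have GconstAll : ∀ i i' j : ℤ, LS i j - LS i (j-1) = LS i' j - LS i' (j-1) := by
    have key : ∀ i j : ℤ, LS i j - LS i (j-1) = LS 0 j - LS 0 (j-1) := by
      intro i j
      induction i using Int.induction_on with
      | zero => rfl
      | succ k ih =>
        rw [← ih]
        have h := Gconst ((k : ℤ) + 1) j
        rw [show ((k : ℤ) + 1) - 1 = (k : ℤ) from by ring] at h
        exact h
      | pred k ih =>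
        rw [← ih]
        exact (Gconst (-(k : ℤ)) j).symm
    intro i i' j
    rw [key i j, key i' j]
  have G0 : ∀ i j : ℤ, LS i j - LS i (j-1) = 0 := by
    intro i j
    obtain ⟨z, hz1, hz2⟩ := avoid e₂ he₂0 (-(e₁ * j)) (-(e₁ * (j-1)))
    have v1 : LS z j = 0 := by
      apply hvanish
      intro q hq heq
      exact hz1 q hq (by linarith [heq])
    have v2 : LS z (j-1) = 0 := by
      apply hvanish
      intro q hq heq
      exact hz2 q hq (by linarith [heq])
    rw [GconstAll i z j, v1, v2, sub_zero]
  have LS0 : ∀ i j : ℤ, LS i j = 0 := by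
    have Lconst : ∀ i j : ℤ, LS i j = LS i (j-1) := fun i j =>
      sub_eq_zero.1 (G0 i j)
    have key : ∀ i j : ℤ, LS i j = LS i 0 := by
      intro i j
      induction j using Int.induction_on with
      | zero => rfl
      | succ k ih =>
        rw [← ih]
        have h := Lconst i ((k : ℤ) + 1)
        rw [show ((k : ℤ) + 1) - 1 = (k : ℤ) from by ring] at h
        exact h
      | pred k ih =>
        rw [← ih]
        exact (Lconst i (-(k : ℤ))).symm
    intro i j
    obtain ⟨z, hz1, _⟩ := avoid (-e₁) (neg_ne_zero.2 he₁0) (e₂ * i) 0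
    have v1 : LS i z = 0 := by
      apply hvanish
      intro q hq heq
      exact hz1 q hq (by linarith [heq])
    rw [key i j, ← key i z, v1]
  -- final contradiction via hslope
  obtain ⟨i, j, hnd⟩ := hslope (-e₂) e₁ (neg_ne_zero.2 he₂0) he₁0 (hcop.symm.neg_left)
  apply hnd
  have hfun : (fun r : ℤ => w (i + r * e₁, j - r * -e₂)) = fun r : ℤ => w (i + r * e₁, j + r * e₂) := by
    funext r
    have : j - r * -e₂ = j + r * e₂ := by ring
    rw [this]
  rw [show (∑ᶠ r : ℤ, w (i + r * e₁, j - r * -e₂)) = ∑ᶠ r : ℤ, w (i + r * e₁, j + r * e₂) from by rw [hfun]]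
  rw [← ZMod.intCast_zmod_eq_zero_iff_dvd]
  rw [bridge i j e₁ e₂ he₁0]
  exact LS0 i j
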